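/- Let d = 3 and define the local rule f : Fin 3 → Fin 3 → Fin 3 → Fin 3 by f x y z = z if y ∈ {0,1}, and, if y = 2, f x 2 z = τ z where τ 0 = 1, τ 1 = 0, τ 2 = 2 (the 3-state CA rule 201210210201210210201210210). Then for every n ≥ 3, the global map F of the n-cell periodic-boundary CA is bijective. -/

import Mathlib

def f18 : Fin 3 → Fin 3 → Fin 3 → Fin 3 :=
  fun _ y z => if y = 0 ∨ y = 1 then z else ![1, 0, 2] z

lemma f18_key1 : ∀ x x' a b b' : Fin 3, f18 x a b = f18 x' a b' → b = b' := by decide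

lemma f18_key2 : ∀ a a' b b' e e' : Fin 3,
    f18 0 a b = f18 0 a' b' → f18 0 b e = f18 0 b' e' → b = b' ∨ e = e' := by decide

theorem stmt_18 (n : ℕ) (hn : 3 ≤ n) :
    Function.Bijective
      (fun (c : ZMod n → Fin 3) (i : ZMod n) => f18 (c (i - 1)) (c i) (c (i + 1))) := by
  haveI : NeZero n := ⟨by omega⟩
  rw [← Finite.injective_iff_bijective]
  intro c c' h
  have h' : ∀ i : ZMod n, f18 (c (i-1)) (c i) (c (i+1)) = f18 (c' (i-1)) (c' i) (c' (i+1)) :=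
    fun i => congrFun h i
  -- propagation: agreement at i propagates to i + k
  have prop : ∀ i : ZMod n, c i = c' i → ∀ k : ℕ, c (i + k) = c' (i + k) := by
    intro i hi k
    induction k with
    | zero => simpa using hi
    | succ k ih =>
      have := h' (i + k)
      rw [ih] at this
      have := f18_key1 _ _ _ _ _ this
      convert this using 2 <;> push_cast <;> ring
  -- there is a point of agreement
  have ⟨j, hj⟩ : ∃ j : ZMod n, c j = c' j := by
    by_cases h0 : c 0 = c' 0
    · exact ⟨0, h0⟩
    · have h1 : f18 0 (c 0) (c 1) = f18 0 (c' 0) (c' 1) := by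
        have := h' 0; simpa [f18] using this
      have h2 : f18 0 (c 1) (c (1+1)) = f18 0 (c' 1) (c' (1+1)) := by
        have := h' 1; simpa [f18] using this
      have := f18_key2 (c 0) (c' 0) (c 1) (c' 1) (c (1+1)) (c' (1+1)) h1 h2
      rcases this with hb | he
      · exact ⟨1, hb⟩
      · exact ⟨1 + 1, he⟩
  funext m
  have : ∀ m : ZMod n, c m = c' m := by
    intro m
    have hk := prop j hj (m - j).val
    rwa [ZMod.natCast_val, ZMod.cast_id, add_sub_cancel] at hk
  exact this m
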